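/- Let F be a field and n ≤ p be positive integers with p ≥ 2. Then every affine hyperplane of Mat_{n,p}(F) (i.e., every affine subspace of dimension np − 1) contains a matrix of rank n. -/

import Mathlib

open Matrix

/-- Given a linear functional `f` on `Mat_{n,p}(F)` not vanishing on the standard basis
matrix `E_{i0,j0}`, and any target value `c`, there is a matrix of full rank `n` with
`f M = c`, provided `n ≤ p` and `p ≥ 2`. -/
lemma exists_full_rank_aux (F : Type*) [Field F] (n p : ℕ) (hnp : n ≤ p) (hp : 2 ≤ p)
    (f : Matrix (Fin n) (Fin p) F →ₗ[F] F) (i0 : Fin n) (j0 : Fin p)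
    (hC : f (single i0 j0 1) ≠ 0) (c : F) :
    ∃ M : Matrix (Fin n) (Fin p) F, f M = c ∧ M.rank = n := by
  -- pick j1 ≠ j0
  obtain ⟨j1, hj1⟩ : ∃ j1 : Fin p, j1 ≠ j0 := by
    rcases Decidable.eq_or_ne j0 ⟨0, by omega⟩ with h | h
    · exact ⟨⟨1, by omega⟩, by simp [h, Fin.ext_iff]⟩
    · exact ⟨⟨0, by omega⟩, fun hh => h hh.symm⟩
  obtain ⟨σ, hσinj, hσ0⟩ : ∃ σ : Fin n → Fin p, Function.Injective σ ∧ σ i0 = j1 :=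
    ⟨(Equiv.swap (Fin.castLE hnp i0) j1) ∘ Fin.castLE hnp,
      (Equiv.injective _).comp (Fin.castLE_injective hnp), by simp⟩
  set base : Matrix (Fin n) (Fin p) F := Matrix.of fun i j => if j = σ i then 1 else 0 with hbase
  set t : F := (c - f base) / f (single i0 j0 1) with ht
  set M : Matrix (Fin n) (Fin p) F := base + t • single i0 j0 1 with hMdef
  have hM : ∀ i j, M i j = (if j = σ i then (1:F) else 0) + (if i = i0 ∧ j = j0 then t else 0) := by
    intro i j
    simp only [hMdef, Matrix.add_apply, Matrix.smul_apply, Matrix.single, Matrix.of_apply,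
      smul_eq_mul, mul_ite, mul_one, mul_zero, hbase]
    congr 1
    simp [and_comm, eq_comm]
  refine ⟨M, ?_, ?_⟩
  · rw [hMdef, map_add, LinearMap.map_smul, smul_eq_mul, ht]
    field_simp
    ring
  · have hli : LinearIndependent F (fun i => M i) := by
      rw [Fintype.linearIndependent_iff]
      intro g hg
      have key : ∀ j : Fin p, ∑ i, g i * M i j = 0 := by
        intro j
        have := congrFun hg j
        simpa [Finset.sum_apply] using this
      have hgi0 : g i0 = 0 := by
        have h1 := key j1
        have : ∀ i, g i * M i j1 = if i = i0 then g i else 0 := by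
          intro i
          rw [hM]
          rcases Decidable.eq_or_ne i i0 with rfl | hi
          · simp [hσ0, hj1]
          · have : j1 ≠ σ i := by
              rw [← hσ0]; exact fun h => hi (hσinj h.symm) |>.elim
            simp [this, hi, fun (h : j1 = j0) => hj1 h]
        rw [Finset.sum_congr rfl (fun i _ => this i)] at h1
        simpa using h1
      intro i
      rcases Decidable.eq_or_ne i i0 with rfl | hi
      · exact hgi0
      · have h1 := key (σ i)
        have : ∀ k, g k * M k (σ i) = if k = i then g k else 0 := by
          intro k
          rw [hM]
          rcases Decidable.eq_or_ne k i with rfl | hk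
          · have : k ≠ i0 := hi
            simp [this]
          · have h2 : σ i ≠ σ k := fun h => hk (hσinj h).symm
            rcases Decidable.eq_or_ne k i0 with rfl | hk0
            · simp [h2, hgi0]
            · simp [h2, hk0, hk]
        rw [Finset.sum_congr rfl (fun k _ => this k)] at h1
        simpa using h1
    rw [← Matrix.rank_transpose, Matrix.rank_eq_finrank_span_cols, Matrix.col_transpose, Matrix.row]
    rw [finrank_span_eq_card hli, Fintype.card_fin]

/-- For `0 < n ≤ p` and `p ≥ 2`, every affine hyperplane of `Mat_{n,p}(F)` (a nonempty
affine subspace of dimension `np - 1`) contains a matrix of rank `n`. -/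
theorem affine_hyperplane_contains_full_rank (F : Type*) [Field F]
    (n p : ℕ) (hn : 0 < n) (hnp : n ≤ p) (hp : 2 ≤ p)
    (𝓗 : AffineSubspace F (Matrix (Fin n) (Fin p) F))
    (hne : (𝓗 : Set (Matrix (Fin n) (Fin p) F)).Nonempty)
    (hdim : Module.finrank F 𝓗.direction = n * p - 1) :
    ∃ M ∈ 𝓗, M.rank = n := by
  classical
  obtain ⟨A, hA⟩ := hne
  have hfull : Module.finrank F (Matrix (Fin n) (Fin p) F) = n * p := by
    rw [Module.finrank_matrix]; simp
  have h2 : 2 ≤ n * p := le_trans hp (Nat.le_mul_of_pos_left p hn)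
  set S := 𝓗.direction with hS
  -- build a linear functional with kernel S
  have hq : Module.finrank F (Matrix (Fin n) (Fin p) F ⧸ S) = 1 := by
    have := Submodule.finrank_quotient_add_finrank S
    rw [hfull, hdim] at this
    omega
  have b : Module.Basis (Fin 1) F (Matrix (Fin n) (Fin p) F ⧸ S) := Module.basisUnique (Fin 1) hq
  set f : Matrix (Fin n) (Fin p) F →ₗ[F] F := (b.coord 0).comp S.mkQ with hf
  have hker : ∀ x, f x = 0 ↔ x ∈ S := by
    intro x
    simp only [hf, LinearMap.comp_apply]
    constructor
    · intro h
      have hz : S.mkQ x = 0 := by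
        have hrep : b.repr (S.mkQ x) = 0 := by
          apply Finsupp.ext
          intro i
          rw [Subsingleton.elim i 0]
          simpa [Module.Basis.coord_apply] using h
        simpa using congrArg b.repr.symm hrep
      rwa [← Submodule.Quotient.mk_eq_zero, ← Submodule.mkQ_apply]
    · intro h
      have : S.mkQ x = 0 := by rwa [Submodule.mkQ_apply, Submodule.Quotient.mk_eq_zero]
      simp [this]
  -- f is nonzero on some standard basis matrix
  obtain ⟨i0, j0, hC⟩ : ∃ i0 j0, f (single i0 j0 1) ≠ 0 := by
    by_contra hcon
    push_neg at hcon
    have hf0 : ∀ x : Matrix (Fin n) (Fin p) F, f x = 0 := by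
      intro x
      rw [Matrix.matrix_eq_sum_single x, map_sum]
      refine Finset.sum_eq_zero fun i _ => ?_
      rw [map_sum]
      refine Finset.sum_eq_zero fun j _ => ?_
      have hsm : single i j (x i j) = x i j • single i j (1:F) := by
        ext a b
        simp [Matrix.single, Matrix.smul_apply]
      rw [hsm, LinearMap.map_smul, hcon i j, smul_zero]
    have hStop : S = ⊤ := by
      rw [Submodule.eq_top_iff']
      intro x
      rw [← hker]
      exact hf0 x
    rw [hStop] at hdim
    rw [show Module.finrank F (⊤ : Submodule F (Matrix (Fin n) (Fin p) F)) =
        Module.finrank F (Matrix (Fin n) (Fin p) F) from finrank_top F _, hfull] at hdim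
    omega
  obtain ⟨M, hfM, hrank⟩ := exists_full_rank_aux F n p hnp hp f i0 j0 hC (f A)
  refine ⟨M, ?_, hrank⟩
  rw [← AffineSubspace.vsub_right_mem_direction_iff_mem hA M]
  rw [← hS, ← hker]
  simp [vsub_eq_sub, map_sub, hfM]
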